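/- Let X be a countable alphabet, p a probability distribution on X, and X_1,...,X_n (n ≥ 2) i.i.d. samples from p with empirical estimator p̂_u = #{i ≤ n : X_i = u}/n. Let d ≥ 1 be an integer and c_1,...,c_d nonnegative real numbers. Then E[ Σ_{u∈X} Σ_{k=1}^{d} c_k (p̂_u(1−p̂_u))^k ] ≥ (1 − 1/n)^{d} · Σ_{u∈X} Σ_{k=1}^{d} c_k (p_u(1−p_u))^k. -/

import Mathlib

open MeasureTheory ProbabilityTheory Finset

/-- The empirical (maximum likelihood) estimator `p̂_u = #{i ≤ n : X_i = u} / n`. -/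
noncomputable def emp {𝒳 : Type*} [DecidableEq 𝒳] {Ω : Type*} {n : ℕ}
    (X : Fin n → Ω → 𝒳) (ω : Ω) (u : 𝒳) : ℝ :=
  ((Finset.univ.filter (fun i => X i ω = u)).card : ℝ) / n

/-- The coefficients `c k` (for `1 ≤ k ≤ d`) satisfy the binomial central-moment identity:
for every `θ ∈ [0,1]` and `Y ~ Bin(n, θ)`,
`E[(Y - nθ)^m] = ∑_{k=1}^d c k (θ(1-θ))^k`. -/
def MomentIdentity (n m d : ℕ) (c : ℕ → ℝ) : Prop :=
  ∀ θ : ℝ, θ ∈ Set.Icc (0:ℝ) 1 →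
    ∑ y ∈ Finset.range (n+1),
        (n.choose y : ℝ) * θ^y * (1-θ)^(n-y) * ((y:ℝ) - n*θ)^m
      = ∑ k ∈ Finset.Icc 1 d, c k * (θ*(1-θ))^k


section Aux
variable {𝒳 : Type*} [DecidableEq 𝒳] [MeasurableSpace 𝒳] [MeasurableSingletonClass 𝒳]
  {Ω : Type*} [MeasureSpace Ω] [IsProbabilityMeasure (ℙ : Measure Ω)]
  {n : ℕ} {X : Fin n → Ω → 𝒳}

lemma emp_eq_sum (ω : Ω) (u : 𝒳) :
    emp X ω u = (∑ i, if X i ω = u then (1:ℝ) else 0) / n := by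
  rw [emp, Finset.card_filter]
  push_cast
  rfl

lemma emp_meas (hmeas : ∀ i, Measurable (X i)) (u : 𝒳) :
    Measurable (fun ω => emp X ω u) := by
  simp only [emp_eq_sum]
  apply Measurable.div_const
  exact Finset.measurable_sum _ fun i _ =>
    Measurable.ite ((hmeas i) (measurableSet_singleton u)) measurable_const measurable_const

lemma emp_mem (ω : Ω) (u : 𝒳) : emp X ω u ∈ Set.Icc (0:ℝ) 1 := by
  rcases Nat.eq_zero_or_pos n with h | h
  · subst h; simp [emp]
  have hn : (0:ℝ) < n := by exact_mod_cast h
  constructor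
  · exact div_nonneg (Nat.cast_nonneg _) (Nat.cast_nonneg _)
  · rw [emp, div_le_one hn]
    exact_mod_cast (Finset.card_filter_le _ _).trans_eq (by simp)

lemma integral_ind (hmeas : ∀ i, Measurable (X i)) (i : Fin n) (u : 𝒳) :
    ∫ ω, (if X i ω = u then (1:ℝ) else 0) ∂ℙ = (ℙ {ω | X i ω = u}).toReal := by
  have h1 : (fun ω => if X i ω = u then (1:ℝ) else 0)
      = Set.indicator ((X i)⁻¹' {u}) (fun _ => (1:ℝ)) := by
    ext ω; by_cases h : X i ω = u <;> simp [Set.indicator_apply, h]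
  rw [h1, integral_indicator_const _ ((hmeas i) (measurableSet_singleton u))]
  rw [smul_eq_mul, mul_one]
  rfl

lemma integrable_ind (hmeas : ∀ i, Measurable (X i)) (i j : Fin n) (u : 𝒳) :
    Integrable (fun ω => (if X i ω = u then (1:ℝ) else 0) * (if X j ω = u then (1:ℝ) else 0)) ℙ := by
  have h1 : (fun ω => (if X i ω = u then (1:ℝ) else 0) * (if X j ω = u then (1:ℝ) else 0))
      = Set.indicator ((X i)⁻¹' {u} ∩ (X j)⁻¹' {u}) (fun _ => (1:ℝ)) := by
    ext ω; by_cases h : X i ω = u <;> by_cases h' : X j ω = u <;>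
      simp [Set.indicator_apply, h, h']
  rw [h1]
  exact (integrable_const (1:ℝ)).indicator
    (((hmeas i) (measurableSet_singleton u)).inter ((hmeas j) (measurableSet_singleton u)))

lemma integral_ind_mul (hmeas : ∀ i, Measurable (X i))
    (hindep : iIndepFun X ℙ) {i j : Fin n} (hij : i ≠ j) (u : 𝒳) :
    ∫ ω, (if X i ω = u then (1:ℝ) else 0) * (if X j ω = u then (1:ℝ) else 0) ∂ℙ
      = (ℙ {ω | X i ω = u}).toReal * (ℙ {ω | X j ω = u}).toReal := by
  have h1 : (fun ω => (if X i ω = u then (1:ℝ) else 0) * (if X j ω = u then (1:ℝ) else 0))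
      = Set.indicator ((X i)⁻¹' {u} ∩ (X j)⁻¹' {u}) (fun _ => (1:ℝ)) := by
    ext ω; by_cases h : X i ω = u <;> by_cases h' : X j ω = u <;>
      simp [Set.indicator_apply, h, h']
  rw [h1, integral_indicator_const _
      (((hmeas i) (measurableSet_singleton u)).inter ((hmeas j) (measurableSet_singleton u)))]
  have h2 := (hindep.indepFun hij).measure_inter_preimage_eq_mul {u} {u}
    (measurableSet_singleton u) (measurableSet_singleton u)
  rw [smul_eq_mul, mul_one, measureReal_def, h2, ENNReal.toReal_mul]
  rfl

end Aux

section Aux2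
variable {𝒳 : Type*} [DecidableEq 𝒳] [MeasurableSpace 𝒳] [MeasurableSingletonClass 𝒳]
  {Ω : Type*} [MeasureSpace Ω] [IsProbabilityMeasure (ℙ : Measure Ω)]
  {n : ℕ} {X : Fin n → Ω → 𝒳}

lemma integral_emp_one_sub (hn : 1 ≤ n) (hmeas : ∀ i, Measurable (X i))
    (hindep : iIndepFun X ℙ) (u : 𝒳) {q : ℝ}
    (hq : ∀ i, (ℙ {ω | X i ω = u}).toReal = q) :
    ∫ ω, emp X ω u * (1 - emp X ω u) ∂ℙ = (1 - 1/(n:ℝ)) * (q * (1 - q)) := by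
  set Y : Fin n → Ω → ℝ := fun i ω => if X i ω = u then (1:ℝ) else 0 with hY
  have hnR : (n:ℝ) ≠ 0 := by positivity
  have hpt : ∀ ω, emp X ω u * (1 - emp X ω u)
      = (∑ i, Y i ω) / n - (∑ i, ∑ j, Y i ω * Y j ω) / (n:ℝ)^2 := by
    intro ω
    rw [emp_eq_sum]
    rw [← Finset.sum_mul_sum]
    field_simp
    ring
  simp only [hpt]
  have hint2 : ∀ i j : Fin n, Integrable (fun ω => Y i ω * Y j ω) ℙ :=
    fun i j => integrable_ind hmeas i j u
  have hint1 : ∀ i : Fin n, Integrable (fun ω => Y i ω) ℙ := by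
    intro i
    have h : (fun ω => Y i ω) = (fun ω => Y i ω * Y i ω) := by
      ext ω; rw [hY]; by_cases h : X i ω = u <;> simp [h]
    rw [h]; exact hint2 i i
  have hintS : Integrable (fun ω => (∑ i, Y i ω) / n) ℙ :=
    (integrable_finset_sum _ fun i _ => hint1 i).div_const _
  have hintS2 : Integrable (fun ω => (∑ i, ∑ j, Y i ω * Y j ω) / (n:ℝ)^2) ℙ :=
    (integrable_finset_sum _ fun i _ => integrable_finset_sum _ fun j _ => hint2 i j).div_const _
  rw [integral_sub hintS hintS2, integral_div, integral_div,
    integral_finset_sum _ fun i _ => hint1 i,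
    integral_finset_sum _ fun i _ => integrable_finset_sum _ fun j _ => hint2 i j,
    Finset.sum_congr rfl fun i _ => integral_finset_sum _ fun j _ => hint2 i j]
  have e1 : ∀ i : Fin n, ∫ ω, Y i ω ∂ℙ = q := fun i => by
    rw [hY]; rw [integral_ind hmeas i u, hq i]
  have e2 : ∀ i j : Fin n, ∫ ω, Y i ω * Y j ω ∂ℙ = if i = j then q else q^2 := by
    intro i j
    by_cases hij : i = j
    · subst hij
      simp only [if_pos rfl]
      have h : ∀ ω, Y i ω * Y i ω = Y i ω := by
        intro ω; rw [hY]; by_cases h : X i ω = u <;> simp [h]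
      simp only [h]; exact e1 i
    · rw [if_neg hij, integral_ind_mul hmeas hindep hij u, hq i, hq j, sq]
  simp only [e1, e2, Finset.sum_const, Finset.card_univ, Fintype.card_fin, nsmul_eq_mul]
  have inner : ∀ i : Fin n, ∑ j : Fin n, (if i = j then q else q^2)
      = (n:ℝ)*q^2 + (q - q^2) := by
    intro i
    have h : ∀ j : Fin n, (if i = j then q else q^2)
        = q^2 + (if i = j then q - q^2 else 0) := by
      intro j; by_cases h : i = j <;> simp [h]
    rw [Finset.sum_congr rfl fun j _ => h j, Finset.sum_add_distrib,
      Finset.sum_ite_eq, if_pos (Finset.mem_univ i), Finset.sum_const,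
      Finset.card_univ, Fintype.card_fin, nsmul_eq_mul]
  rw [Finset.sum_congr rfl fun i _ => inner i, Finset.sum_const, Finset.card_univ,
    Fintype.card_fin, nsmul_eq_mul]
  have hnR2 : (n:ℝ) ≠ 0 := hnR
  field_simp
  ring

end Aux2

section Aux3
variable {Ω : Type*} [MeasureSpace Ω] [IsProbabilityMeasure (ℙ : Measure Ω)]

lemma integrable_of_mem_Icc {Z : Ω → ℝ} (hZm : Measurable Z)
    (hZ : ∀ ω, Z ω ∈ Set.Icc (0:ℝ) 1) : Integrable Z ℙ := by
  refine Integrable.mono' (integrable_const (1:ℝ)) hZm.aestronglyMeasurable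
    (ae_of_all _ fun ω => ?_)
  rw [Real.norm_eq_abs, abs_le]
  exact ⟨by linarith [(hZ ω).1], (hZ ω).2⟩

lemma jensen_pow {Z : Ω → ℝ} (hZm : Measurable Z)
    (hZ : ∀ ω, Z ω ∈ Set.Icc (0:ℝ) 1) (k : ℕ) :
    (∫ ω, Z ω ∂ℙ)^k ≤ ∫ ω, (Z ω)^k ∂ℙ := by
  have hconv : ConvexOn ℝ (Set.Icc (0:ℝ) 1) (fun x : ℝ => x ^ k) :=
    (convexOn_pow k).subset Set.Icc_subset_Ici_self (convex_Icc 0 1)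
  have hZk : ∀ ω, (Z ω)^k ∈ Set.Icc (0:ℝ) 1 := fun ω =>
    ⟨pow_nonneg (hZ ω).1 k, pow_le_one₀ (hZ ω).1 (hZ ω).2⟩
  exact hconv.map_integral_le ((continuous_pow k).continuousOn) isClosed_Icc
    (ae_of_all _ hZ) (integrable_of_mem_Icc hZm hZ)
    (integrable_of_mem_Icc (hZm.pow_const k) hZk)

end Aux3

section Aux4
variable {𝒳 : Type*} [DecidableEq 𝒳] [MeasurableSpace 𝒳] [MeasurableSingletonClass 𝒳]
  {Ω : Type*} [MeasureSpace Ω] [IsProbabilityMeasure (ℙ : Measure Ω)]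
  {n : ℕ} {X : Fin n → Ω → 𝒳}

lemma integral_emp (hn : 1 ≤ n) (hmeas : ∀ i, Measurable (X i)) (u : 𝒳) {q : ℝ}
    (hq : ∀ i, (ℙ {ω | X i ω = u}).toReal = q) :
    ∫ ω, emp X ω u ∂ℙ = q := by
  have hnR : (n:ℝ) ≠ 0 := by positivity
  simp only [emp_eq_sum]
  rw [integral_div, integral_finset_sum _ fun i _ => by
    have h : (fun ω => if X i ω = u then (1:ℝ) else 0)
        = (fun ω => (if X i ω = u then (1:ℝ) else 0) * (if X i ω = u then (1:ℝ) else 0)) := by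
      ext ω; by_cases h : X i ω = u <;> simp [h]
    rw [h]; exact integrable_ind hmeas i i u]
  rw [Finset.sum_congr rfl fun i _ => (integral_ind hmeas i u).trans (hq i)]
  simp only [Finset.sum_const, Finset.card_univ, Fintype.card_fin, nsmul_eq_mul]
  field_simp

end Aux4


/-- **Jensen step (eq. (19)).**
`E[∑_u ∑_{k=1}^d c_k (p̂_u(1-p̂_u))^k] ≥ (1 - 1/n)^d ∑_u ∑_{k=1}^d c_k (p_u(1-p_u))^k`. -/
theorem expected_empirical_sum_lower_bound
    {𝒳 : Type*} [Countable 𝒳] [DecidableEq 𝒳]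
    [MeasurableSpace 𝒳] [MeasurableSingletonClass 𝒳]
    {Ω : Type*} [MeasureSpace Ω] [IsProbabilityMeasure (ℙ : Measure Ω)]
    (p : 𝒳 → ℝ) (hp0 : ∀ u, 0 ≤ p u) (hp1 : ∑' u, p u = 1)
    (n : ℕ) (hn : 2 ≤ n)
    (X : Fin n → Ω → 𝒳) (hmeas : ∀ i, Measurable (X i))
    (hindep : iIndepFun X ℙ)
    (hdist : ∀ i u, (ℙ {ω | X i ω = u}).toReal = p u)
    (d : ℕ) (hd : 1 ≤ d)
    (c : ℕ → ℝ) (hcnonneg : ∀ k ∈ Finset.Icc 1 d, 0 ≤ c k) :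
    (1 - 1/(n:ℝ))^d * ∑' u, ∑ k ∈ Finset.Icc 1 d, c k * (p u * (1 - p u))^k ≤
      ∫ ω, (∑' u, ∑ k ∈ Finset.Icc 1 d, c k * (emp X ω u * (1 - emp X ω u))^k) ∂ℙ := by
  classical
  have hn1 : 1 ≤ n := le_trans (by norm_num) hn
  have hnR : (0:ℝ) < n := by exact_mod_cast lt_of_lt_of_le (by norm_num) hn
  have h1n0 : (0:ℝ) ≤ 1 - 1/(n:ℝ) := by
    have : 1/(n:ℝ) ≤ 1 := by
      rw [div_le_one hnR]; exact_mod_cast hn1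
    linarith
  have h1n1 : (1:ℝ) - 1/(n:ℝ) ≤ 1 := by
    have : (0:ℝ) ≤ 1/(n:ℝ) := by positivity
    linarith
  have hsum_p : Summable p := by
    by_contra h
    rw [tsum_eq_zero_of_not_summable h] at hp1
    norm_num at hp1
  have hple : ∀ u, p u ≤ 1 := fun u =>
    hp1 ▸ Summable.le_tsum hsum_p u (fun v _ => hp0 v)
  set C : ℝ := ∑ k ∈ Finset.Icc 1 d, c k with hC
  have hC0 : 0 ≤ C := Finset.sum_nonneg hcnonneg
  -- the per-alphabet-letter functions
  set W : 𝒳 → Ω → ℝ := fun u ω => emp X ω u * (1 - emp X ω u) with hWdef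
  have hWmem : ∀ u ω, W u ω ∈ Set.Icc (0:ℝ) 1 := by
    intro u ω
    obtain ⟨h0, h1⟩ := emp_mem (X := X) ω u
    exact ⟨mul_nonneg h0 (by linarith), mul_le_one₀ h1 (by linarith) (by linarith)⟩
  have hWmeas : ∀ u, Measurable (W u) := fun u =>
    (emp_meas hmeas u).mul (measurable_const.sub (emp_meas hmeas u))
  have hWE : ∀ u, ∫ ω, W u ω ∂ℙ = (1 - 1/(n:ℝ)) * (p u * (1 - p u)) := fun u =>
    integral_emp_one_sub hn1 hmeas hindep u (fun i => hdist i u)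
  have hWkmem : ∀ u (k : ℕ), ∀ ω, (W u ω)^k ∈ Set.Icc (0:ℝ) 1 := fun u k ω =>
    ⟨pow_nonneg (hWmem u ω).1 k, pow_le_one₀ (hWmem u ω).1 (hWmem u ω).2⟩
  have hWkint : ∀ u (k : ℕ), Integrable (fun ω => (W u ω)^k) ℙ := fun u k =>
    integrable_of_mem_Icc ((hWmeas u).pow_const k) (hWkmem u k)
  set F : 𝒳 → Ω → ℝ := fun u ω => ∑ k ∈ Finset.Icc 1 d, c k * (W u ω)^k with hFdef
  have hFint : ∀ u, Integrable (F u) ℙ := fun u =>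
    integrable_finset_sum _ fun k _ => (hWkint u k).const_mul _
  have hFnonneg : ∀ u ω, 0 ≤ F u ω := fun u ω =>
    Finset.sum_nonneg fun k hk => mul_nonneg (hcnonneg k hk) (hWkmem u k ω).1
  -- pointwise bound F u ω ≤ C * emp X ω u
  have hFle : ∀ u ω, F u ω ≤ C * emp X ω u := by
    intro u ω
    rw [hC, Finset.sum_mul]
    refine Finset.sum_le_sum fun k hk => ?_
    obtain ⟨hk1, _⟩ := Finset.mem_Icc.mp hk
    refine mul_le_mul_of_nonneg_left ?_ (hcnonneg k hk)
    obtain ⟨h0, h1⟩ := emp_mem (X := X) ω u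
    calc (W u ω)^k ≤ W u ω := pow_le_of_le_one (hWmem u ω).1 (hWmem u ω).2 (by omega)
      _ ≤ emp X ω u := by
          show emp X ω u * (1 - emp X ω u) ≤ emp X ω u
          nlinarith
  have hempint : ∀ u, ∫ ω, emp X ω u ∂ℙ = p u := fun u =>
    integral_emp hn1 hmeas u (fun i => hdist i u)
  have hFbound : ∀ u, ∫ ω, F u ω ∂ℙ ≤ C * p u := by
    intro u
    calc ∫ ω, F u ω ∂ℙ ≤ ∫ ω, C * emp X ω u ∂ℙ :=
          integral_mono (hFint u)
            ((integrable_of_mem_Icc (emp_meas hmeas u) (fun ω => emp_mem ω u)).const_mul C)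
            (fun ω => hFle u ω)
      _ = C * p u := by rw [integral_const_mul, hempint u]
  -- key per-u inequality
  have hkey : ∀ u, (1 - 1/(n:ℝ))^d * (∑ k ∈ Finset.Icc 1 d, c k * (p u * (1 - p u))^k)
      ≤ ∫ ω, F u ω ∂ℙ := by
    intro u
    rw [hFdef]
    rw [integral_finset_sum _ fun k _ => (hWkint u k).const_mul _, Finset.mul_sum]
    refine Finset.sum_le_sum fun k hk => ?_
    obtain ⟨hk1, hkd⟩ := Finset.mem_Icc.mp hk
    rw [integral_const_mul]
    have hre : (1 - 1/(n:ℝ))^d * (c k * (p u * (1 - p u))^k)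
        = c k * ((1 - 1/(n:ℝ))^d * (p u * (1 - p u))^k) := by ring
    rw [hre]
    refine mul_le_mul_of_nonneg_left ?_ (hcnonneg k hk)
    have hj : ((1 - 1/(n:ℝ)) * (p u * (1 - p u)))^k ≤ ∫ ω, (W u ω)^k ∂ℙ := by
      rw [← hWE u]; exact jensen_pow (hWmeas u) (hWmem u) k
    refine le_trans ?_ hj
    rw [mul_pow (1 - 1/(n:ℝ)) (p u * (1 - p u)) k]
    have hpu : 0 ≤ (p u * (1 - p u))^k :=
      pow_nonneg (mul_nonneg (hp0 u) (by linarith [hple u])) k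
    exact mul_le_mul_of_nonneg_right (pow_le_pow_of_le_one h1n0 h1n1 hkd) hpu
  -- summability facts
  have hRle : ∀ u, ∑ k ∈ Finset.Icc 1 d, c k * (p u * (1 - p u))^k ≤ C * p u := by
    intro u
    rw [hC, Finset.sum_mul]
    refine Finset.sum_le_sum fun k hk => ?_
    obtain ⟨hk1, _⟩ := Finset.mem_Icc.mp hk
    refine mul_le_mul_of_nonneg_left ?_ (hcnonneg k hk)
    have h0 : 0 ≤ p u * (1 - p u) := mul_nonneg (hp0 u) (by linarith [hple u])
    have h1 : p u * (1 - p u) ≤ 1 :=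
      mul_le_one₀ (hple u) (by linarith [hple u]) (by linarith [hp0 u])
    calc (p u * (1 - p u))^k ≤ p u * (1 - p u) := pow_le_of_le_one h0 h1 (by omega)
      _ ≤ p u := by nlinarith [hp0 u, hple u]
  have hRnonneg : ∀ u, 0 ≤ ∑ k ∈ Finset.Icc 1 d, c k * (p u * (1 - p u))^k := by
    intro u
    refine Finset.sum_nonneg fun k hk => mul_nonneg (hcnonneg k hk) (pow_nonneg ?_ k)
    exact mul_nonneg (hp0 u) (by linarith [hple u])
  have hsumR : Summable (fun u => ∑ k ∈ Finset.Icc 1 d, c k * (p u * (1 - p u))^k) :=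
    Summable.of_nonneg_of_le hRnonneg hRle (hsum_p.mul_left C)
  have hsumI : Summable (fun u => ∫ ω, F u ω ∂ℙ) :=
    Summable.of_nonneg_of_le (fun u => integral_nonneg (hFnonneg u)) hFbound
      (hsum_p.mul_left C)
  -- exchange integral and tsum
  have hswap : ∫ ω, (∑' u, F u ω) ∂ℙ = ∑' u, ∫ ω, F u ω ∂ℙ := by
    refine integral_tsum (fun u => ((hFint u).aestronglyMeasurable)) ?_
    have hb : ∀ u, ∫⁻ ω, ‖F u ω‖₊ ∂ℙ ≤ ENNReal.ofReal (C * p u) := by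
      intro u
      have h1 : ∀ ω, (‖F u ω‖₊ : ENNReal) = ENNReal.ofReal (F u ω) := fun ω =>
        Real.enorm_eq_ofReal (hFnonneg u ω)
      calc ∫⁻ ω, ‖F u ω‖₊ ∂ℙ = ∫⁻ ω, ENNReal.ofReal (F u ω) ∂ℙ := by
            simp only [h1]
        _ = ENNReal.ofReal (∫ ω, F u ω ∂ℙ) :=
            (ofReal_integral_eq_lintegral_ofReal (hFint u)
              (ae_of_all _ (hFnonneg u))).symm
        _ ≤ ENNReal.ofReal (C * p u) := ENNReal.ofReal_le_ofReal (hFbound u)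
    refine ne_top_of_le_ne_top ?_ (ENNReal.tsum_le_tsum hb)
    rw [← ENNReal.ofReal_tsum_of_nonneg (fun u => mul_nonneg hC0 (hp0 u)) (hsum_p.mul_left C)]
    exact ENNReal.ofReal_ne_top
  have hfinal : (1 - 1/(n:ℝ))^d * ∑' u, ∑ k ∈ Finset.Icc 1 d, c k * (p u * (1 - p u))^k
      ≤ ∑' u, ∫ ω, F u ω ∂ℙ := by
    rw [← tsum_mul_left]
    exact Summable.tsum_le_tsum hkey (hsumR.mul_left _) hsumI
  exact hfinal.trans_eq hswap.symm
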